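/- Under the hypotheses of the sine-iterate bounds (T, B, S₀ strongly continuous, ‖T(t)‖ ≤ M e^(ωt) t^(α−1)/Γ(α), ‖S₀(t)‖ ≤ M t e^(ωt), S_{n+1}(t)x = ∫₀ᵗ T(t−s)B(s)S_n(s)x ds, 1 < α ≤ 2, M ≥ 1, ω ≥ 0), for every t ≥ 0 and x ∈ X the tail series Σ_{n=1}^∞ S_n(t)x converges absolutely and ‖Σ_{n=1}^∞ S_n(t)x‖ ≤ M · e^(ωt) · t · [E_{α,2}(M·K_t·t^α) − 1] · ‖x‖, where K_t = sup_{0≤s≤t} ‖B(s)‖. Equivalently, ‖S_α(t; A+B) − S_α(t; A)‖ ≤ M e^(ωt) t [E_{α,2}(M K_t t^α) − 1]. -/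

import Mathlib

open MeasureTheory intervalIntegral

lemma rpow_cont (c : ℝ) (hc : 0 < c) : Continuous fun s : ℝ => s ^ c :=
  continuous_iff_continuousAt.mpr fun x => Real.continuousAt_rpow_const x c (Or.inr hc.le)

lemma realBeta (a b : ℝ) (ha : 0 < a) (hb : 0 < b) :
    ∫ y in (0:ℝ)..1, y ^ a * (1 - y) ^ b =
      Real.Gamma (a + 1) * Real.Gamma (b + 1) / Real.Gamma (a + b + 2) := by
  have ha1 : (0:ℝ) < a + 1 := by linarith
  have hb1 : (0:ℝ) < b + 1 := by linarith
  have key := Complex.Gamma_mul_Gamma_eq_betaIntegral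
    (s := (a + 1 : ℝ)) (t := (b + 1 : ℝ)) (by simpa using ha1) (by simpa using hb1)
  have hBeta : Complex.betaIntegral (↑(a+1)) (↑(b+1)) =
      ((∫ y in (0:ℝ)..1, y ^ a * (1 - y) ^ b : ℝ) : ℂ) := by
    rw [Complex.betaIntegral, ← intervalIntegral.integral_ofReal]
    apply intervalIntegral.integral_congr
    intro y hy
    rw [Set.uIcc_of_le (by norm_num : (0:ℝ) ≤ 1)] at hy
    simp only
    rw [Complex.ofReal_mul, Complex.ofReal_cpow hy.1,
      Complex.ofReal_cpow (by linarith [hy.2] : (0:ℝ) ≤ 1 - y)]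
    push_cast
    norm_num
  rw [hBeta] at key
  have hGab : Real.Gamma (a + b + 2) ≠ 0 := (Real.Gamma_pos_of_pos (by linarith)).ne'
  have key2 : Real.Gamma (a+1) * Real.Gamma (b+1) =
      Real.Gamma (a + b + 2) * ∫ y in (0:ℝ)..1, y ^ a * (1 - y) ^ b := by
    have := key
    rw [show ((↑(a+1):ℂ) + (↑(b+1):ℂ)) = ((a + b + 2 : ℝ) : ℂ) by push_cast; ring,
      Complex.Gamma_ofReal, Complex.Gamma_ofReal, Complex.Gamma_ofReal] at this
    exact_mod_cast this
  rw [key2]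
  field_simp

lemma convol_eval (u c d : ℝ) (hu : 0 ≤ u) (hc : 0 < c) (hd : 0 < d) :
    ∫ s in (0:ℝ)..u, s ^ c * (u - s) ^ d =
      u ^ (c + d + 1) * (Real.Gamma (c + 1) * Real.Gamma (d + 1) / Real.Gamma (c + d + 2)) := by
  rcases hu.eq_or_lt with h | h
  · rw [← h, intervalIntegral.integral_same,
      Real.zero_rpow (by positivity : (0:ℝ) < c + d + 1).ne', zero_mul]
  · have h1 : (∫ s in (0:ℝ)..u, s ^ c * (u - s) ^ d) =
        u • ∫ y in (0:ℝ)..1, (u * y) ^ c * (u - u * y) ^ d := by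
      rw [intervalIntegral.smul_integral_comp_mul_left (fun s => s ^ c * (u - s) ^ d) u]
      norm_num
    rw [h1]
    have h2 : (∫ y in (0:ℝ)..1, (u * y) ^ c * (u - u * y) ^ d) =
        ∫ y in (0:ℝ)..1, u ^ (c + d) * (y ^ c * (1 - y) ^ d) := by
      apply intervalIntegral.integral_congr
      intro y hy
      rw [Set.uIcc_of_le (by norm_num : (0:ℝ) ≤ 1)] at hy
      simp only
      rw [show u - u * y = u * (1 - y) by ring, Real.mul_rpow hu hy.1,
        Real.mul_rpow hu (by linarith [hy.2]), Real.rpow_add h]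
      ring
    rw [h2, intervalIntegral.integral_const_mul, smul_eq_mul, ← mul_assoc,
      show u * u ^ (c + d) = u ^ (c + d + 1) by
        rw [show c + d + 1 = 1 + (c + d) by ring, Real.rpow_add h 1 (c + d), Real.rpow_one]]
    congr 1
    exact realBeta c d hc hd

/-- The tail series `Σ_{n≥1} S_n(t)x` converges absolutely and
`‖S_α(t;A+B)x − S_α(t;A)x‖ ≤ M e^{ωt} t [E_{α,2}(M K_t t^α) − 1] ‖x‖`. -/
theorem perturbed_sine_difference_bound {X : Type*} [NormedAddCommGroup X]
    [NormedSpace ℝ X] [CompleteSpace X]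
    (α M ω : ℝ) (hα1 : 1 < α) (hα2 : α ≤ 2) (hM : 1 ≤ M) (hω : 0 ≤ ω)
    (T B : ℝ → X →L[ℝ] X) (S : ℕ → ℝ → X →L[ℝ] X)
    (hTcont : ∀ x : X, ContinuousOn (fun t => T t x) (Set.Ici 0))
    (hBcont : ∀ x : X, ContinuousOn (fun t => B t x) (Set.Ici 0))
    (hS0cont : ∀ x : X, ContinuousOn (fun t => S 0 t x) (Set.Ici 0))
    (hTbd : ∀ t : ℝ, 0 ≤ t → ‖T t‖ ≤ M * Real.exp (ω * t) * t ^ (α - 1) / Real.Gamma α)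
    (hS0bd : ∀ t : ℝ, 0 ≤ t → ‖S 0 t‖ ≤ M * t * Real.exp (ω * t))
    (hrec : ∀ (n : ℕ) (t : ℝ) (x : X),
      S (n + 1) t x = ∫ s in (0:ℝ)..t, T (t - s) (B s (S n s x)))
    (t : ℝ) (ht : 0 ≤ t) (x : X) :
    Summable (fun n : ℕ => ‖S (n + 1) t x‖) ∧
    ‖∑' n : ℕ, S (n + 1) t x‖ ≤ M * Real.exp (ω * t) * t *
      ((∑' k : ℕ, (M * (sSup ((fun s => ‖B s‖) '' Set.Icc 0 t)) * t ^ α) ^ k /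
        Real.Gamma ((k : ℝ) * α + 2)) - 1) * ‖x‖ := by
  set K := sSup ((fun s => ‖B s‖) '' Set.Icc 0 t) with hKdef
  have hα0 : (0:ℝ) < α := by linarith
  have hΓα : 0 < Real.Gamma α := Real.Gamma_pos_of_pos hα0
  have hM0 : (0:ℝ) < M := by linarith
  -- boundedness of B on [0,t] via Banach–Steinhaus
  have hBS : ∀ y : X, ∃ C, ∀ i : (Set.Icc (0:ℝ) t), ‖B i y‖ ≤ C := by
    intro y
    obtain ⟨C, hC⟩ := isCompact_Icc.exists_bound_of_continuousOn
      ((hBcont y).mono Set.Icc_subset_Ici_self)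
    exact ⟨C, fun i => hC i i.2⟩
  obtain ⟨C', hC'⟩ := banach_steinhaus hBS
  have hbdd : BddAbove ((fun s => ‖B s‖) '' Set.Icc 0 t) := by
    refine ⟨C', ?_⟩
    rintro _ ⟨s, hs, rfl⟩
    exact hC' ⟨s, hs⟩
  have hKle : ∀ s ∈ Set.Icc (0:ℝ) t, ‖B s‖ ≤ K :=
    fun s hs => le_csSup hbdd ⟨s, hs, rfl⟩
  have hK0 : 0 ≤ K := le_trans (norm_nonneg (B 0)) (hKle 0 ⟨le_refl 0, ht⟩)
  -- the iterate bounds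
  have key : ∀ n : ℕ, ∀ u ∈ Set.Icc (0:ℝ) t,
      ‖S n u x‖ ≤ M ^ (n+1) * K ^ n / Real.Gamma ((n:ℝ) * α + 2) *
        (u ^ ((n:ℝ) * α + 1) * Real.exp (ω * u)) * ‖x‖ := by
    intro n
    induction n with
    | zero =>
      intro u hu
      have hΓ2 : Real.Gamma (((0:ℕ):ℝ) * α + 2) = 1 := by
        norm_num [Real.Gamma_two]
      have he : u ^ (((0:ℕ):ℝ) * α + 1) = u := by
        norm_num
      rw [hΓ2, he]
      calc ‖S 0 u x‖ ≤ ‖S 0 u‖ * ‖x‖ := (S 0 u).le_opNorm x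
        _ ≤ (M * u * Real.exp (ω * u)) * ‖x‖ :=
            mul_le_mul_of_nonneg_right (hS0bd u hu.1) (norm_nonneg x)
        _ = M ^ (0+1) * K ^ 0 / 1 * (u * Real.exp (ω * u)) * ‖x‖ := by ring
    | succ n ih =>
      intro u hu
      have hc : (0:ℝ) < (n:ℝ) * α + 1 := by positivity
      have hd : (0:ℝ) < α - 1 := by linarith
      have hΓn : 0 < Real.Gamma ((n:ℝ) * α + 2) := Real.Gamma_pos_of_pos (by positivity)
      have hΓn1 : 0 < Real.Gamma ((n:ℝ) * α + α + 2) := Real.Gamma_pos_of_pos (by positivity)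
      set Cn := M ^ (n+1) * K ^ n / Real.Gamma ((n:ℝ) * α + 2) with hCndef
      have hCn0 : 0 ≤ Cn := by positivity
      rw [hrec]
      set D := M * K * Cn * ‖x‖ * Real.exp (ω * u) / Real.Gamma α with hDdef
      have hD0 : 0 ≤ D := by positivity
      have hgcont : Continuous fun s : ℝ => D * (s ^ ((n:ℝ) * α + 1) * (u - s) ^ (α - 1)) :=
        continuous_const.mul ((rpow_cont _ hc).mul
          ((rpow_cont _ hd).comp (continuous_const.sub continuous_id)))
      have hbound : ∀ᵐ s ∂(volume.restrict (Set.uIoc (0:ℝ) u)),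
          ‖T (u - s) (B s (S n s x))‖ ≤ D * (s ^ ((n:ℝ) * α + 1) * (u - s) ^ (α - 1)) := by
        refine (ae_restrict_iff' measurableSet_uIoc).mpr (Filter.Eventually.of_forall ?_)
        intro s hs
        rw [Set.uIoc_of_le hu.1] at hs
        have hs0 : 0 ≤ s := hs.1.le
        have hsu : s ≤ u := hs.2
        have hb1 : ‖T (u - s)‖ ≤ M * Real.exp (ω * (u - s)) * (u - s) ^ (α - 1) / Real.Gamma α :=
          hTbd _ (by linarith)
        have hb2 : ‖B s‖ ≤ K := hKle s ⟨hs0, hsu.trans hu.2⟩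
        have hb3 : ‖S n s x‖ ≤ Cn * (s ^ ((n:ℝ) * α + 1) * Real.exp (ω * s)) * ‖x‖ :=
          ih s ⟨hs0, hsu.trans hu.2⟩
        have hexp : Real.exp (ω * (u - s)) * Real.exp (ω * s) = Real.exp (ω * u) := by
          rw [← Real.exp_add]; ring_nf
        calc ‖T (u - s) (B s (S n s x))‖
            ≤ ‖T (u - s)‖ * ‖B s (S n s x)‖ := (T (u - s)).le_opNorm _
          _ ≤ ‖T (u - s)‖ * (‖B s‖ * ‖S n s x‖) :=
              mul_le_mul_of_nonneg_left ((B s).le_opNorm _) (norm_nonneg _)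
          _ ≤ (M * Real.exp (ω * (u - s)) * (u - s) ^ (α - 1) / Real.Gamma α) *
                (K * (Cn * (s ^ ((n:ℝ) * α + 1) * Real.exp (ω * s)) * ‖x‖)) := by
              refine mul_le_mul hb1 (mul_le_mul hb2 hb3 (norm_nonneg _) hK0)
                (mul_nonneg (norm_nonneg _) (norm_nonneg _)) ?_
              exact div_nonneg (mul_nonneg (by positivity)
                (Real.rpow_nonneg (by linarith) _)) hΓα.le
          _ = D * (s ^ ((n:ℝ) * α + 1) * (u - s) ^ (α - 1)) := by
              rw [hDdef]
              rw [← hexp]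
              ring
      have h1 : ‖∫ s in (0:ℝ)..u, T (u - s) (B s (S n s x))‖ ≤
          |∫ s in (0:ℝ)..u, D * (s ^ ((n:ℝ) * α + 1) * (u - s) ^ (α - 1))| :=
        intervalIntegral.norm_integral_le_abs_of_norm_le hbound (hgcont.intervalIntegrable 0 u)
      have h2 : (∫ s in (0:ℝ)..u, D * (s ^ ((n:ℝ) * α + 1) * (u - s) ^ (α - 1))) =
          D * (u ^ (((n:ℝ) * α + 1) + (α - 1) + 1) *
            (Real.Gamma (((n:ℝ) * α + 1) + 1) * Real.Gamma ((α - 1) + 1) /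
              Real.Gamma (((n:ℝ) * α + 1) + (α - 1) + 2))) := by
        rw [intervalIntegral.integral_const_mul, convol_eval u _ _ hu.1 hc hd]
      refine h1.trans ?_
      rw [h2, abs_of_nonneg (mul_nonneg hD0 (mul_nonneg (Real.rpow_nonneg hu.1 _)
        (by positivity)))]
      have he1 : (((n:ℝ) * α + 1) + (α - 1) + 1) = ((n+1:ℕ):ℝ) * α + 1 := by
        push_cast; ring
      have he2 : (((n:ℝ) * α + 1) + 1) = (n:ℝ) * α + 2 := by ring
      have he3 : ((α - 1) + 1) = α := by ring
      have he4 : (((n:ℝ) * α + 1) + (α - 1) + 2) = ((n+1:ℕ):ℝ) * α + 2 := by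
        push_cast; ring
      rw [he1, he2, he3, he4, hDdef, hCndef]
      have hΓn1' : 0 < Real.Gamma (((n+1:ℕ):ℝ) * α + 2) := by
        apply Real.Gamma_pos_of_pos; push_cast; positivity
      apply le_of_eq
      field_simp
      ring
  -- case t = 0
  rcases ht.eq_or_lt with htz | htpos
  · have hz : ∀ n : ℕ, S (n+1) t x = 0 := by
      intro n
      rw [hrec, ← htz, intervalIntegral.integral_same]
    constructor
    · simp only [hz, norm_zero]
      exact summable_zero
    · simp only [hz, tsum_zero, norm_zero]
      rw [show t = 0 from htz.symm]
      simp
  -- case 0 < t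
  · have hΓpos : ∀ k : ℕ, 0 < Real.Gamma ((k:ℝ) * α + 2) :=
      fun k => Real.Gamma_pos_of_pos (by positivity)
    have hr0 : 0 ≤ M * K * t ^ α := by positivity
    have hf : Summable (fun k : ℕ => (M * K * t ^ α) ^ k / Real.Gamma ((k:ℝ) * α + 2)) := by
      refine Summable.of_nonneg_of_le (fun k => by positivity) (fun k => ?_)
        (Real.summable_pow_div_factorial (M * K * t ^ α))
      have h2 : Real.Gamma ((k:ℝ) + 2) ≤ Real.Gamma ((k:ℝ) * α + 2) := by
        apply Real.Gamma_strictMonoOn_Ici.monotoneOn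
        · simp only [Set.mem_Ici]
          linarith [Nat.cast_nonneg (α := ℝ) k]
        · simp only [Set.mem_Ici]
          nlinarith [Nat.cast_nonneg (α := ℝ) k]
        · nlinarith [Nat.cast_nonneg (α := ℝ) k]
      have h3 : Real.Gamma ((k:ℝ) + 2) = ((k+1).factorial : ℝ) := by
        rw [show ((k:ℝ) + 2) = ((k+1:ℕ):ℝ) + 1 by push_cast; ring,
          Real.Gamma_nat_eq_factorial]
      have h1 : (k.factorial : ℝ) ≤ Real.Gamma ((k:ℝ) * α + 2) := by
        calc (k.factorial : ℝ) ≤ ((k+1).factorial : ℝ) := by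
              exact_mod_cast Nat.factorial_le (Nat.le_succ k)
          _ = Real.Gamma ((k:ℝ) + 2) := h3.symm
          _ ≤ _ := h2
      exact div_le_div_of_nonneg_left (by positivity) (by positivity) h1
    have hf1 : Summable (fun n : ℕ =>
        (M * K * t ^ α) ^ (n+1) / Real.Gamma (((n+1:ℕ):ℝ) * α + 2)) :=
      (summable_nat_add_iff
        (f := fun k : ℕ => (M * K * t ^ α) ^ k / Real.Gamma ((k:ℝ) * α + 2)) 1).mpr hf
    have hbnd : ∀ n : ℕ, ‖S (n+1) t x‖ ≤ (M * Real.exp (ω * t) * t * ‖x‖) *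
        ((M * K * t ^ α) ^ (n+1) / Real.Gamma (((n+1:ℕ):ℝ) * α + 2)) := by
      intro n
      refine (key (n+1) t ⟨ht, le_rfl⟩).trans (le_of_eq ?_)
      have hts : t ^ (((n+1:ℕ):ℝ) * α + 1) = (t ^ α) ^ (n+1) * t := by
        rw [← Real.rpow_natCast (t ^ α) (n+1), ← Real.rpow_mul ht,
          show (((n+1:ℕ):ℝ) * α + 1) = α * ((n+1:ℕ):ℝ) + 1 by ring,
          Real.rpow_add htpos, Real.rpow_one]
      have hΓ : (0:ℝ) < Real.Gamma (((n+1:ℕ):ℝ) * α + 2) := hΓpos (n+1)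
      rw [hts, mul_pow, mul_pow]
      field_simp
      ring
    have hsum : Summable (fun n : ℕ => ‖S (n+1) t x‖) :=
      Summable.of_nonneg_of_le (fun n => norm_nonneg _) hbnd (hf1.mul_left _)
    refine ⟨hsum, ?_⟩
    have hsplit : ∑' n : ℕ, (M * K * t ^ α) ^ (n+1) / Real.Gamma (((n+1:ℕ):ℝ) * α + 2) =
        (∑' k : ℕ, (M * K * t ^ α) ^ k / Real.Gamma ((k:ℝ) * α + 2)) - 1 := by
      rw [Summable.tsum_eq_zero_add hf]
      have h0 : (M * K * t ^ α) ^ (0:ℕ) / Real.Gamma (((0:ℕ):ℝ) * α + 2) = 1 := by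
        norm_num [Real.Gamma_two]
      rw [h0]
      ring
    calc ‖∑' n : ℕ, S (n+1) t x‖ ≤ ∑' n : ℕ, ‖S (n+1) t x‖ := norm_tsum_le_tsum_norm hsum
      _ ≤ ∑' n : ℕ, (M * Real.exp (ω * t) * t * ‖x‖) *
            ((M * K * t ^ α) ^ (n+1) / Real.Gamma (((n+1:ℕ):ℝ) * α + 2)) :=
          Summable.tsum_le_tsum hbnd hsum (hf1.mul_left _)
      _ = (M * Real.exp (ω * t) * t * ‖x‖) *
            ∑' n : ℕ, (M * K * t ^ α) ^ (n+1) / Real.Gamma (((n+1:ℕ):ℝ) * α + 2) :=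
          tsum_mul_left
      _ = M * Real.exp (ω * t) * t *
            ((∑' k : ℕ, (M * K * t ^ α) ^ k / Real.Gamma ((k:ℝ) * α + 2)) - 1) * ‖x‖ := by
          rw [hsplit]; ring
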